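/- In an algebra satisfying (R1)-(R3), the associative law r;(s;t)=(r;s);t, the identity law r;1'=r, and the cycle law ((r;s)·t = 0 iff (r⁻;t)·s = 0), the second involution law (r;s)⁻ = s⁻;r⁻ holds. -/
import Mathlib
private theorem keylem {A : Type*} (add : A → A → A) (compl : A → A)
    (R1 : ∀ r s, add r s = add s r)
    (R2 : ∀ r s t, add r (add s t) = add (add r s) t)
    (R3 : ∀ r s, add (compl (add (compl r) s)) (compl (add (compl r) (compl s))) = r)
    (x y : A) : add x (compl x) = add y (compl y) := by
  haveI : Std.Commutative add := ⟨R1⟩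
  haveI : Std.Associative add := ⟨fun a b c => (R2 a b c).symm⟩
  have h1 : (add (compl (add (compl x) (compl y))) (compl (add (compl x) y))) = x := by
    calc (add (compl (add (compl x) (compl y))) (compl (add (compl x) y)))
      _ = (add (compl (add (compl x) y)) (compl (add (compl x) (compl y)))) := by ac_rfl
      _ = x := congrArg (fun z => z) (R3 x y)
  have h3 : (add (compl (add (compl (compl y)) (compl x))) (compl (add (compl x) (compl y)))) = x := by
    calc (add (compl (add (compl (compl y)) (compl x))) (compl (add (compl x) (compl y))))
      _ = (add (compl (add (compl x) (compl y))) (compl (add (compl x) (compl (compl y))))) := by ac_rfl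
      _ = x := congrArg (fun z => z) (R3 x (compl y))
  have h8 : (add (compl (add (compl x) (compl y))) (compl (add (compl y) x))) = y := by
    calc (add (compl (add (compl x) (compl y))) (compl (add (compl y) x)))
      _ = (add (compl (add (compl y) x)) (compl (add (compl y) (compl x)))) := by ac_rfl
      _ = y := congrArg (fun z => z) (R3 y x)
  have h10 : (add (compl (add (compl (compl x)) (compl y))) (compl (add (compl x) (compl y)))) = y := by
    calc (add (compl (add (compl (compl x)) (compl y))) (compl (add (compl x) (compl y))))
      _ = (add (compl (add (compl y) (compl x))) (compl (add (compl y) (compl (compl x))))) := by ac_rfl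
      _ = y := congrArg (fun z => z) (R3 y (compl x))
  have h17 : (add (compl (add (compl (compl x)) (compl y))) (compl (add (compl (compl x)) y))) = (compl x) := by
    calc (add (compl (add (compl (compl x)) (compl y))) (compl (add (compl (compl x)) y)))
      _ = (add (compl (add (compl (compl x)) y)) (compl (add (compl (compl x)) (compl y)))) := by ac_rfl
      _ = (compl x) := congrArg (fun z => z) (R3 (compl x) y)
  have h19 : (add (compl (add (compl (compl x)) (compl (compl y)))) (compl (add (compl (compl x)) (compl y)))) = (compl x) := by
    calc (add (compl (add (compl (compl x)) (compl (compl y)))) (compl (add (compl (compl x)) (compl y))))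
      _ = (add (compl (add (compl (compl x)) (compl y))) (compl (add (compl (compl x)) (compl (compl y))))) := by ac_rfl
      _ = (compl x) := congrArg (fun z => z) (R3 (compl x) (compl y))
  have h24 : (add (compl (add (compl (compl y)) (compl x))) (compl (add (compl (compl y)) x))) = (compl y) := by
    calc (add (compl (add (compl (compl y)) (compl x))) (compl (add (compl (compl y)) x)))
      _ = (add (compl (add (compl (compl y)) x)) (compl (add (compl (compl y)) (compl x)))) := by ac_rfl
      _ = (compl y) := congrArg (fun z => z) (R3 (compl y) x)
  have h26 : (add (compl (add (compl (compl x)) (compl (compl y)))) (compl (add (compl (compl y)) (compl x)))) = (compl y) := by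
    calc (add (compl (add (compl (compl x)) (compl (compl y)))) (compl (add (compl (compl y)) (compl x))))
      _ = (add (compl (add (compl (compl y)) (compl x))) (compl (add (compl (compl y)) (compl (compl x))))) := by ac_rfl
      _ = (compl y) := congrArg (fun z => z) (R3 (compl y) (compl x))
  have h65 : (add (compl (add (compl y) x)) x) = (add (compl (add (compl x) y)) y) := by
    calc (add (compl (add (compl y) x)) x)
      _ = (add x (compl (add (compl y) x))) := by ac_rfl
      _ = (add (add (compl (add (compl x) (compl y))) (compl (add (compl x) y))) (compl (add (compl y) x))) := congrArg (fun z => (add z (compl (add (compl y) x)))) h1.symm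
      _ = (add (add (compl (add (compl x) (compl y))) (compl (add (compl y) x))) (compl (add (compl x) y))) := by ac_rfl
      _ = (add y (compl (add (compl x) y))) := congrArg (fun z => (add z (compl (add (compl x) y)))) h8
      _ = (add (compl (add (compl x) y)) y) := by ac_rfl
  have h66 : (add (compl (add (compl (compl x)) (compl y))) x) = (add (compl (add (compl x) y)) y) := by
    calc (add (compl (add (compl (compl x)) (compl y))) x)
      _ = (add x (compl (add (compl (compl x)) (compl y)))) := by ac_rfl
      _ = (add (add (compl (add (compl x) (compl y))) (compl (add (compl x) y))) (compl (add (compl (compl x)) (compl y)))) := congrArg (fun z => (add z (compl (add (compl (compl x)) (compl y))))) h1.symm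
      _ = (add (add (compl (add (compl (compl x)) (compl y))) (compl (add (compl x) (compl y)))) (compl (add (compl x) y))) := by ac_rfl
      _ = (add y (compl (add (compl x) y))) := congrArg (fun z => (add z (compl (add (compl x) y)))) h10
      _ = (add (compl (add (compl x) y)) y) := by ac_rfl
  have h69 : (add (compl (add (compl (compl y)) (compl x))) y) = (add (compl (add (compl x) y)) y) := by
    calc (add (compl (add (compl (compl y)) (compl x))) y)
      _ = (add y (compl (add (compl (compl y)) (compl x)))) := by ac_rfl
      _ = (add (add (compl (add (compl x) (compl y))) (compl (add (compl y) x))) (compl (add (compl (compl y)) (compl x)))) := congrArg (fun z => (add z (compl (add (compl (compl y)) (compl x))))) h8.symm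
      _ = (add (add (compl (add (compl (compl y)) (compl x))) (compl (add (compl x) (compl y)))) (compl (add (compl y) x))) := by ac_rfl
      _ = (add x (compl (add (compl y) x))) := congrArg (fun z => (add z (compl (add (compl y) x)))) h3
      _ = (add (compl (add (compl y) x)) x) := by ac_rfl
      _ = (add (compl (add (compl x) y)) y) := congrArg (fun z => z) h65
  have h76 : (add (compl (add (compl x) (compl y))) (compl x)) = (add (compl (add (compl (compl x)) y)) y) := by
    calc (add (compl (add (compl x) (compl y))) (compl x))
      _ = (add (compl x) (compl (add (compl x) (compl y)))) := by ac_rfl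
      _ = (add (add (compl (add (compl (compl x)) (compl y))) (compl (add (compl (compl x)) y))) (compl (add (compl x) (compl y)))) := congrArg (fun z => (add z (compl (add (compl x) (compl y))))) h17.symm
      _ = (add (add (compl (add (compl (compl x)) (compl y))) (compl (add (compl x) (compl y)))) (compl (add (compl (compl x)) y))) := by ac_rfl
      _ = (add y (compl (add (compl (compl x)) y))) := congrArg (fun z => (add z (compl (add (compl (compl x)) y)))) h10
      _ = (add (compl (add (compl (compl x)) y)) y) := by ac_rfl
  have h80 : (add (compl (add (compl (compl x)) (compl (compl y)))) y) = (add (compl (add (compl (compl x)) y)) y) := by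
    calc (add (compl (add (compl (compl x)) (compl (compl y)))) y)
      _ = (add y (compl (add (compl (compl x)) (compl (compl y))))) := by ac_rfl
      _ = (add (add (compl (add (compl (compl x)) (compl y))) (compl (add (compl x) (compl y)))) (compl (add (compl (compl x)) (compl (compl y))))) := congrArg (fun z => (add z (compl (add (compl (compl x)) (compl (compl y)))))) h10.symm
      _ = (add (add (compl (add (compl (compl x)) (compl (compl y)))) (compl (add (compl (compl x)) (compl y)))) (compl (add (compl x) (compl y)))) := by ac_rfl
      _ = (add (compl x) (compl (add (compl x) (compl y)))) := congrArg (fun z => (add z (compl (add (compl x) (compl y))))) h19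
      _ = (add (compl (add (compl x) (compl y))) (compl x)) := by ac_rfl
      _ = (add (compl (add (compl (compl x)) y)) y) := congrArg (fun z => z) h76
  have h81 : (add (compl (add (compl x) (compl y))) (compl y)) = (add (compl (add (compl (compl y)) x)) x) := by
    calc (add (compl (add (compl x) (compl y))) (compl y))
      _ = (add (compl y) (compl (add (compl x) (compl y)))) := by ac_rfl
      _ = (add (add (compl (add (compl (compl y)) (compl x))) (compl (add (compl (compl y)) x))) (compl (add (compl x) (compl y)))) := congrArg (fun z => (add z (compl (add (compl x) (compl y))))) h24.symm
      _ = (add (add (compl (add (compl (compl y)) (compl x))) (compl (add (compl x) (compl y)))) (compl (add (compl (compl y)) x))) := by ac_rfl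
      _ = (add x (compl (add (compl (compl y)) x))) := congrArg (fun z => (add z (compl (add (compl (compl y)) x)))) h3
      _ = (add (compl (add (compl (compl y)) x)) x) := by ac_rfl
  have h85 : (add (compl (add (compl (compl x)) (compl (compl y)))) x) = (add (compl (add (compl (compl y)) x)) x) := by
    calc (add (compl (add (compl (compl x)) (compl (compl y)))) x)
      _ = (add x (compl (add (compl (compl x)) (compl (compl y))))) := by ac_rfl
      _ = (add (add (compl (add (compl (compl y)) (compl x))) (compl (add (compl x) (compl y)))) (compl (add (compl (compl x)) (compl (compl y))))) := congrArg (fun z => (add z (compl (add (compl (compl x)) (compl (compl y)))))) h3.symm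
      _ = (add (add (compl (add (compl (compl x)) (compl (compl y)))) (compl (add (compl (compl y)) (compl x)))) (compl (add (compl x) (compl y)))) := by ac_rfl
      _ = (add (compl y) (compl (add (compl x) (compl y)))) := congrArg (fun z => (add z (compl (add (compl x) (compl y))))) h26
      _ = (add (compl (add (compl x) (compl y))) (compl y)) := by ac_rfl
      _ = (add (compl (add (compl (compl y)) x)) x) := congrArg (fun z => z) h81
  have h156 : (add (add (compl (add (compl (compl y)) x)) (compl (add (compl x) y))) y) = (add (add (compl (add (compl (compl x)) y)) (compl (add (compl x) y))) y) := by
    calc (add (add (compl (add (compl (compl y)) x)) (compl (add (compl x) y))) y)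
      _ = (add (add (compl (add (compl x) y)) y) (compl (add (compl (compl y)) x))) := by ac_rfl
      _ = (add (add (compl (add (compl y) x)) x) (compl (add (compl (compl y)) x))) := congrArg (fun z => (add z (compl (add (compl (compl y)) x)))) h65.symm
      _ = (add (add (compl (add (compl (compl y)) x)) x) (compl (add (compl y) x))) := by ac_rfl
      _ = (add (add (compl (add (compl (compl x)) (compl (compl y)))) x) (compl (add (compl y) x))) := congrArg (fun z => (add z (compl (add (compl y) x)))) h85.symm
      _ = (add (add (compl (add (compl y) x)) x) (compl (add (compl (compl x)) (compl (compl y))))) := by ac_rfl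
      _ = (add (add (compl (add (compl x) y)) y) (compl (add (compl (compl x)) (compl (compl y))))) := congrArg (fun z => (add z (compl (add (compl (compl x)) (compl (compl y)))))) h65
      _ = (add (add (compl (add (compl (compl x)) (compl (compl y)))) y) (compl (add (compl x) y))) := by ac_rfl
      _ = (add (add (compl (add (compl (compl x)) y)) y) (compl (add (compl x) y))) := congrArg (fun z => (add z (compl (add (compl x) y)))) h80
      _ = (add (add (compl (add (compl (compl x)) y)) (compl (add (compl x) y))) y) := by ac_rfl
  have h179 : (add (add (compl (add (compl (compl x)) y)) (compl (add (compl x) y))) y) = (add (compl x) x) := by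
    calc (add (add (compl (add (compl (compl x)) y)) (compl (add (compl x) y))) y)
      _ = (add (add (compl (add (compl x) y)) y) (compl (add (compl (compl x)) y))) := by ac_rfl
      _ = (add (add (compl (add (compl (compl x)) (compl y))) x) (compl (add (compl (compl x)) y))) := congrArg (fun z => (add z (compl (add (compl (compl x)) y)))) h66.symm
      _ = (add (add (compl (add (compl (compl x)) (compl y))) (compl (add (compl (compl x)) y))) x) := by ac_rfl
      _ = (add (compl x) x) := congrArg (fun z => (add z x)) h17
  have h199 : (add (compl y) y) = (add (compl x) x) := by
    calc (add (compl y) y)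
      _ = (add (add (compl (add (compl (compl y)) (compl x))) (compl (add (compl (compl y)) x))) y) := congrArg (fun z => (add z y)) h24.symm
      _ = (add (add (compl (add (compl (compl y)) (compl x))) y) (compl (add (compl (compl y)) x))) := by ac_rfl
      _ = (add (add (compl (add (compl x) y)) y) (compl (add (compl (compl y)) x))) := congrArg (fun z => (add z (compl (add (compl (compl y)) x)))) h69
      _ = (add (add (compl (add (compl (compl y)) x)) (compl (add (compl x) y))) y) := by ac_rfl
      _ = (add (add (compl (add (compl (compl x)) y)) (compl (add (compl x) y))) y) := congrArg (fun z => z) h156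
      _ = (add (compl x) x) := congrArg (fun z => z) h179
  have hgoal : (add (compl x) x) = (add (compl y) y) := by
    calc (add (compl x) x)
      _ = (add (compl y) y) := congrArg (fun z => z) h199.symm
  calc add x (compl x) = add (compl x) x := R1 _ _
    _ = add (compl y) y := hgoal
    _ = add y (compl y) := R1 _ _

private theorem extlem {A : Type*} (add : A → A → A) (compl : A → A) (e : A)
    (R1 : ∀ r s, add r s = add s r)
    (R3 : ∀ r s, add (compl (add (compl r) s)) (compl (add (compl r) (compl s))) = r)
    (x y : A)
    (h1 : compl (add (compl x) (compl (compl y))) = compl (add e (compl e)))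
    (h2 : compl (add (compl y) (compl (compl x))) = compl (add e (compl e))) : x = y := by
  have hx := R3 x (compl y)
  have hy := R3 y (compl x)
  rw [h1] at hx
  rw [h2] at hy
  calc x = add (compl (add (compl x) (compl y))) (compl (add e (compl e))) := hx.symm
    _ = add (compl (add (compl y) (compl x))) (compl (add e (compl e))) := by
        rw [R1 (compl x) (compl y)]
    _ = y := hy

/-- Under (R1)-(R3), the associative law (R4) and identity law (R5),
together with the cycle law (R11'), imply the second involution law (R7). -/
theorem R7_of_cycle_law {A : Type*} (add : A → A → A) (compl : A → A)
    (mul : A → A → A) (conv : A → A) (e : A)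
    (R1 : ∀ r s, add r s = add s r)
    (R2 : ∀ r s t, add r (add s t) = add (add r s) t)
    (R3 : ∀ r s, add (compl (add (compl r) s)) (compl (add (compl r) (compl s))) = r)
    (R4 : ∀ r s t, mul r (mul s t) = mul (mul r s) t)
    (R5 : ∀ r, mul r e = r)
    (R11' : ∀ r s t,
      compl (add (compl (mul r s)) (compl t)) = compl (add e (compl e)) ↔
      compl (add (compl (mul (conv r) t)) (compl s)) = compl (add e (compl e))) :
    ∀ r s, conv (mul r s) = mul (conv s) (conv r) := by
  have Zl : ∀ c : A, compl (add (compl c) (compl (compl c))) = compl (add e (compl e)) :=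
    fun c => congrArg compl (keylem add compl R1 R2 R3 (compl c) e)
  have conv_conv : ∀ p : A, conv (conv p) = p := by
    intro p
    have hkey : ∀ t : A, compl (add (compl p) (compl t)) = compl (add e (compl e)) ↔
        compl (add (compl (conv (conv p))) (compl t)) = compl (add e (compl e)) := by
      intro t
      have h1 := R11' p e t
      rw [R5 p] at h1
      have h2 := R11' (conv p) t e
      rw [R5 (conv (conv p))] at h2
      exact h1.trans h2
    have hA : compl (add (compl p) (compl (compl (conv (conv p))))) = compl (add e (compl e)) :=
      (hkey (compl (conv (conv p)))).mpr (Zl (conv (conv p)))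
    have hB : compl (add (compl (conv (conv p))) (compl (compl p))) = compl (add e (compl e)) :=
      (hkey (compl p)).mp (Zl p)
    exact (extlem add compl e R1 R3 p (conv (conv p)) hA hB).symm
  intro r s
  have hkey : ∀ t : A, compl (add (compl (conv (mul r s))) (compl t)) = compl (add e (compl e)) ↔
      compl (add (compl (mul (conv s) (conv r))) (compl t)) = compl (add e (compl e)) := by
    intro t
    have h1 := R11' (conv (mul r s)) e t
    rw [R5 (conv (mul r s))] at h1
    rw [conv_conv (mul r s)] at h1
    rw [← R4 r s t] at h1
    have h2 := R11' r (mul s t) e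
    rw [R5 (conv r)] at h2
    rw [R1 (compl (conv r)) (compl (mul s t))] at h2
    have h3 := R11' s t (conv r)
    exact h1.trans (h2.trans h3)
  have hA := (hkey (compl (mul (conv s) (conv r)))).mpr (Zl (mul (conv s) (conv r)))
  have hB := (hkey (compl (conv (mul r s)))).mp (Zl (conv (mul r s)))
  exact extlem add compl e R1 R3 (conv (mul r s)) (mul (conv s) (conv r)) hA hB
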